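/- If c::w is an irreducible counterexample for regular expressions p and q over an alphabet Σ, where c is a character and w a string, then w is an irreducible counterexample for δ_c p and δ_c q. -/
import Mathlib

open RegularExpression

variable {α : Type*}

/-- The derivative of a regular expression with respect to a string,
folding the Brzozowski character derivative over the string. -/
def derivs [DecidableEq α] (p : RegularExpression α) (w : List α) : RegularExpression α :=
  w.foldl RegularExpression.deriv p

/-- `w` is a counterexample for `p` and `q` if exactly one of them accepts `w`. -/
def Counterexample (p q : RegularExpression α) (w : List α) : Prop :=
  Xor' (w ∈ p.matches') (w ∈ q.matches')

/-- A string `w` is reducible (for `p` and `q`) if `w = s ++ t ++ u` with `t` nonempty,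
`L(δ_s p) = L(δ_{s++t} p)` and `L(δ_s q) = L(δ_{s++t} q)`. -/
def Reducible [DecidableEq α] (p q : RegularExpression α) (w : List α) : Prop :=
  ∃ s t u : List α, w = s ++ t ++ u ∧ t ≠ [] ∧
    (derivs p s).matches' = (derivs p (s ++ t)).matches' ∧
    (derivs q s).matches' = (derivs q (s ++ t)).matches'

/-- `Sync s p q` : `p` and `q` have no irreducible counterexample having `s` as a prefix. -/
def Sync [DecidableEq α] (s : List α) (p q : RegularExpression α) : Prop :=
  ∀ w : List α, s <+: w → Counterexample p q w → Reducible p q w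

lemma mem_deriv_iff [DecidableEq α] (p : RegularExpression α) (c : α) (w : List α) :
    w ∈ (p.deriv c).matches' ↔ c :: w ∈ p.matches' := by
  rw [← rmatch_iff_matches', ← rmatch_iff_matches', rmatch]

lemma derivs_cons [DecidableEq α] (p : RegularExpression α) (c : α) (s : List α) :
    derivs p (c :: s) = derivs (p.deriv c) s := rfl

theorem irreducible_counterexample_cons [DecidableEq α] (p q : RegularExpression α)
    (c : α) (w : List α)
    (hce : Counterexample p q (c :: w)) (hirr : ¬ Reducible p q (c :: w)) :
    Counterexample (p.deriv c) (q.deriv c) w ∧ ¬ Reducible (p.deriv c) (q.deriv c) w := by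
  constructor
  · unfold Counterexample at *
    rw [mem_deriv_iff, mem_deriv_iff]
    exact hce
  · rintro ⟨s, t, u, hw, ht, hp, hq⟩
    exact hirr ⟨c :: s, t, u, by rw [hw]; rfl, ht, hp, hq⟩
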